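/- Let $b: [0,1] \to [0,1]$ be continuous and strictly increasing with $b(0)=0$, $b(1)=1$, and suppose $t \mapsto b(t)/t^{\rho}$ is non-decreasing on $(0,1]$ for some $\rho > 1/3$. Let $\Pi$ be a L\'evy measure supported on the closed unit ball of $\mathbb{R}^d$ with $\int_{0<|y|\le 1} b^{\leftarrow}(|y|)\,\Pi(dy) < \infty$, where $b^{\leftarrow}$ is the inverse of $b$. Then $\int_0^1 \frac{1}{b(t)^3} \int_{0 < |y| \le b(t)} |y|^3\,\Pi(dy)\, dt \le \frac{1}{3\rho - 1} \int_{0<|y|\le 1} b^{\leftarrow}(|y|)\,\Pi(dy) < \infty$. -/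

import Mathlib

open MeasureTheory Filter Set
open scoped ENNReal

lemma aux_time (b : ℝ → ℝ) (ρ : ℝ) (hρ : 1 / 3 < ρ)
    (hb_mono : StrictMonoOn b (Icc 0 1))
    (hb0 : b 0 = 0)
    (hb_rho : ∀ s t : ℝ, 0 < s → s ≤ t → t ≤ 1 → b s / s ^ ρ ≤ b t / t ^ ρ)
    (r s : ℝ) (hs0 : 0 < s) (hs1 : s ≤ 1) (hbs : b s = r) :
    (∫⁻ t in Ioc (0 : ℝ) 1,
        (ENNReal.ofReal (b t ^ 3))⁻¹ *
          (if r ≤ b t then ENNReal.ofReal (r ^ 3) else 0))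
      ≤ ENNReal.ofReal (1 / (3 * ρ - 1)) * ENNReal.ofReal s := by
  have h3ρ : (1 : ℝ) < 3 * ρ := by linarith
  have hr0 : 0 < r := by
    rw [← hbs, ← hb0]
    exact hb_mono ⟨le_refl 0, zero_le_one⟩ ⟨hs0.le, hs1⟩ hs0
  -- pointwise bound
  have hpt : ∀ t ∈ Ioc (0 : ℝ) 1,
      ((ENNReal.ofReal (b t ^ 3))⁻¹ *
          (if r ≤ b t then ENNReal.ofReal (r ^ 3) else 0))
        ≤ (Icc s 1).indicator (fun t => ENNReal.ofReal (s ^ (3 * ρ) * t ^ (-(3 * ρ)))) t := by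
    intro t ht
    by_cases hc : r ≤ b t
    · have hst : s ≤ t := by
        by_contra hlt
        push_neg at hlt
        have := hb_mono ⟨ht.1.le, ht.2⟩ ⟨hs0.le, hs1⟩ hlt
        rw [hbs] at this
        linarith
      have htmem : t ∈ Icc s 1 := ⟨hst, ht.2⟩
      rw [indicator_of_mem htmem, if_pos hc]
      -- key growth bound
      have ht0 : 0 < t := ht.1
      have hrpow : r * (t / s) ^ ρ ≤ b t := by
        have h := hb_rho s t hs0 hst ht.2
        rw [hbs] at h
        have hsρ : (0 : ℝ) < s ^ ρ := Real.rpow_pos_of_pos hs0 _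
        have htρ : (0 : ℝ) < t ^ ρ := Real.rpow_pos_of_pos ht0 _
        rw [div_le_div_iff₀ hsρ htρ] at h
        rw [Real.div_rpow ht0.le hs0.le, ← mul_div_assoc, div_le_iff₀ hsρ]
        exact h
      -- now bound the ENNReal expression
      have hts0 : (0:ℝ) < t / s := div_pos ht0 hs0
      have hb3 : r ^ 3 * (t / s) ^ (3 * ρ) ≤ b t ^ 3 := by
        have h1 : (r * (t / s) ^ ρ) ^ 3 ≤ b t ^ 3 := by
          apply pow_le_pow_left₀ (by positivity) hrpow
        calc r ^ 3 * (t / s) ^ (3 * ρ) = (r * (t / s) ^ ρ) ^ 3 := by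
              rw [mul_pow, ← Real.rpow_natCast ((t/s) ^ ρ) 3, ← Real.rpow_mul hts0.le]
              norm_num [mul_comm]
          _ ≤ b t ^ 3 := h1
      have hpos : (0:ℝ) < r ^ 3 * (t / s) ^ (3 * ρ) := by positivity
      calc (ENNReal.ofReal (b t ^ 3))⁻¹ * ENNReal.ofReal (r ^ 3)
          ≤ (ENNReal.ofReal (r ^ 3 * (t / s) ^ (3 * ρ)))⁻¹ * ENNReal.ofReal (r ^ 3) := by
            gcongr
        _ = ENNReal.ofReal (r ^ 3) / ENNReal.ofReal (r ^ 3 * (t / s) ^ (3 * ρ)) := by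
            rw [ENNReal.div_eq_inv_mul]
        _ = ENNReal.ofReal (r ^ 3 / (r ^ 3 * (t / s) ^ (3 * ρ))) := by
            rw [ENNReal.ofReal_div_of_pos hpos]
        _ = ENNReal.ofReal (s ^ (3 * ρ) * t ^ (-(3 * ρ))) := by
            congr 1
            have h2 : (t / s) ^ (3 * ρ) = t ^ (3 * ρ) / s ^ (3 * ρ) :=
              Real.div_rpow ht0.le hs0.le _
            have h3 : t ^ (-(3 * ρ)) = (t ^ (3 * ρ))⁻¹ := Real.rpow_neg ht0.le _
            have h4 : (0:ℝ) < t ^ (3*ρ) := Real.rpow_pos_of_pos ht0 _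
            have h5 : (0:ℝ) < s ^ (3*ρ) := Real.rpow_pos_of_pos hs0 _
            rw [h2, h3]
            field_simp
    · rw [if_neg hc, mul_zero]
      exact zero_le
  -- integrate the bound
  calc (∫⁻ t in Ioc (0 : ℝ) 1,
        (ENNReal.ofReal (b t ^ 3))⁻¹ * (if r ≤ b t then ENNReal.ofReal (r ^ 3) else 0))
      ≤ ∫⁻ t in Ioc (0 : ℝ) 1,
          (Icc s 1).indicator (fun t => ENNReal.ofReal (s ^ (3 * ρ) * t ^ (-(3 * ρ)))) t :=
        setLIntegral_mono' measurableSet_Ioc hpt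
    _ = ∫⁻ t in Icc s 1, ENNReal.ofReal (s ^ (3 * ρ) * t ^ (-(3 * ρ))) := by
        rw [lintegral_indicator measurableSet_Icc, Measure.restrict_restrict measurableSet_Icc,
          inter_eq_left.mpr (fun x hx => mem_Ioc.mpr ⟨lt_of_lt_of_le hs0 hx.1, hx.2⟩)]
    _ = ∫⁻ t in Ioc s 1, ENNReal.ofReal (s ^ (3 * ρ) * t ^ (-(3 * ρ))) :=
        (setLIntegral_congr Ioc_ae_eq_Icc).symm
    _ = ENNReal.ofReal (∫ t in Ioc s 1, s ^ (3 * ρ) * t ^ (-(3 * ρ))) := by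
        rw [← ofReal_integral_eq_lintegral_ofReal]
        · have hcont : ContinuousOn (fun t : ℝ => s ^ (3 * ρ) * t ^ (-(3 * ρ))) (Icc s 1) := by
            apply ContinuousOn.mul continuousOn_const
            apply ContinuousOn.rpow_const continuousOn_id
            intro t ht
            exact Or.inl (ne_of_gt (lt_of_lt_of_le hs0 ht.1))
          exact (hcont.integrableOn_Icc).mono_set Ioc_subset_Icc_self
        · filter_upwards [ae_restrict_mem measurableSet_Ioc] with t ht
          have : (0:ℝ) < t := lt_of_lt_of_le hs0 ht.1.le
          positivity
    _ ≤ ENNReal.ofReal (1 / (3 * ρ - 1) * s) := by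
        apply ENNReal.ofReal_le_ofReal
        have h0mem : (0:ℝ) ∉ Set.uIcc s 1 := by
          rw [Set.uIcc_of_le hs1]
          intro h
          exact absurd h.1 (not_le.mpr hs0)
        rw [← intervalIntegral.integral_of_le hs1, intervalIntegral.integral_const_mul,
          integral_rpow (Or.inr ⟨by intro h; have := neg_injective h; linarith, h0mem⟩), Real.one_rpow]
        have hc : (0:ℝ) < 3 * ρ - 1 := by linarith
        have hA : (0:ℝ) < s ^ (3 * ρ) := Real.rpow_pos_of_pos hs0 _
        have hB : (0:ℝ) < s ^ (-(3 * ρ) + 1) := Real.rpow_pos_of_pos hs0 _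
        have hs3 : s ^ (3 * ρ) * s ^ (-(3 * ρ) + 1) = s := by
          rw [← Real.rpow_add hs0, show 3 * ρ + (-(3 * ρ) + 1) = 1 by ring, Real.rpow_one]
        have hflip : (1 - s ^ (-(3 * ρ) + 1)) / (-(3 * ρ) + 1)
            = (s ^ (-(3 * ρ) + 1) - 1) / (3 * ρ - 1) := by
          rw [div_eq_div_iff (by linarith) (by linarith)]
          ring
        rw [hflip]
        calc s ^ (3 * ρ) * ((s ^ (-(3 * ρ) + 1) - 1) / (3 * ρ - 1))
            ≤ s ^ (3 * ρ) * (s ^ (-(3 * ρ) + 1) / (3 * ρ - 1)) := by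
              gcongr
              linarith
          _ = 1 / (3 * ρ - 1) * s := by
              have e : s ^ (3 * ρ) * (s ^ (-(3 * ρ) + 1) / (3 * ρ - 1))
                  = s ^ (3 * ρ) * s ^ (-(3 * ρ) + 1) / (3 * ρ - 1) := by ring
              rw [e, hs3]
              ring
    _ = ENNReal.ofReal (1 / (3 * ρ - 1)) * ENNReal.ofReal s := by
        rw [ENNReal.ofReal_mul (one_div_nonneg.mpr (by linarith))]

theorem stmt2 {d : ℕ} (μ : Measure (EuclideanSpace ℝ (Fin d)))
    (h0 : μ {0} = 0)
    (hsupp : μ {y : EuclideanSpace ℝ (Fin d) | 1 < ‖y‖} = 0)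
    (hint : (∫⁻ y, ENNReal.ofReal (min 1 (‖y‖ ^ 2)) ∂μ) < ⊤)
    (b binv : ℝ → ℝ) (ρ : ℝ) (hρ : 1 / 3 < ρ)
    (hb_cont : ContinuousOn b (Icc 0 1))
    (hb_mono : StrictMonoOn b (Icc 0 1))
    (hb0 : b 0 = 0) (hb1 : b 1 = 1)
    (hb_rho : ∀ s t : ℝ, 0 < s → s ≤ t → t ≤ 1 → b s / s ^ ρ ≤ b t / t ^ ρ)
    (hbinv : ∀ t ∈ Icc (0 : ℝ) 1, binv (b t) = t)
    (hbinv' : ∀ x ∈ Icc (0 : ℝ) 1, b (binv x) = x)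
    (hfin : (∫⁻ y in {y : EuclideanSpace ℝ (Fin d) | 0 < ‖y‖ ∧ ‖y‖ ≤ 1},
        ENNReal.ofReal (binv ‖y‖) ∂μ) < ⊤) :
    (∫⁻ t in Ioc (0 : ℝ) 1,
        (ENNReal.ofReal (b t ^ 3))⁻¹ *
          ∫⁻ y in {y : EuclideanSpace ℝ (Fin d) | 0 < ‖y‖ ∧ ‖y‖ ≤ b t},
            ENNReal.ofReal (‖y‖ ^ 3) ∂μ)
      ≤ ENNReal.ofReal (1 / (3 * ρ - 1)) *
          ∫⁻ y in {y : EuclideanSpace ℝ (Fin d) | 0 < ‖y‖ ∧ ‖y‖ ≤ 1},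
            ENNReal.ofReal (binv ‖y‖) ∂μ ∧
    (∫⁻ t in Ioc (0 : ℝ) 1,
        (ENNReal.ofReal (b t ^ 3))⁻¹ *
          ∫⁻ y in {y : EuclideanSpace ℝ (Fin d) | 0 < ‖y‖ ∧ ‖y‖ ≤ b t},
            ENNReal.ofReal (‖y‖ ^ 3) ∂μ) < ⊤ := by
  set E := EuclideanSpace ℝ (Fin d)
  set S : Set E := {y : E | 0 < ‖y‖ ∧ ‖y‖ ≤ 1} with hS
  have hSmeas : MeasurableSet S := by
    have : S = (fun y : E => ‖y‖) ⁻¹' (Ioc 0 1) := by ext y; simp [hS, Set.mem_Ioc]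
    rw [this]
    exact measurable_norm measurableSet_Ioc
  set ν := μ.restrict S with hν
  -- sigma-finiteness of ν
  haveI hsf : SigmaFinite ν := by
    refine ⟨⟨⟨fun n => {y : E | ‖y‖ ≤ 0} ∪ {y : E | 1 / ((n : ℝ) + 1) ≤ ‖y‖},
      fun _ => trivial, ?_, ?_⟩⟩⟩
    · intro n
      have hmeasn : MeasurableSet ({y : E | ‖y‖ ≤ 0} ∪ {y : E | 1 / ((n : ℝ) + 1) ≤ ‖y‖}) :=
        (measurable_norm measurableSet_Iic).union (measurable_norm measurableSet_Ici)
      rw [hν, Measure.restrict_apply hmeasn]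
      set B : Set E := {y : E | 1 / ((n : ℝ) + 1) ≤ ‖y‖ ∧ ‖y‖ ≤ 1} with hB
      have hBmeas : MeasurableSet B :=
        (measurable_norm measurableSet_Ici).inter (measurable_norm measurableSet_Iic)
      have hsub : ({y : E | ‖y‖ ≤ 0} ∪ {y : E | 1 / ((n : ℝ) + 1) ≤ ‖y‖}) ∩ S ⊆ B := by
        rintro y ⟨hy1, hy2, hy3⟩
        rcases hy1 with h | h
        · exact absurd hy2 (not_lt.mpr h)
        · exact ⟨h, hy3⟩
      have hc0 : (0 : ℝ) < min 1 ((1 / ((n : ℝ) + 1)) ^ 2) := by positivity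
      have key : ENNReal.ofReal (min 1 ((1 / ((n : ℝ) + 1)) ^ 2)) * μ B
          ≤ ∫⁻ y, ENNReal.ofReal (min 1 (‖y‖ ^ 2)) ∂μ := by
        calc ENNReal.ofReal (min 1 ((1 / ((n : ℝ) + 1)) ^ 2)) * μ B
            = ∫⁻ _ in B, ENNReal.ofReal (min 1 ((1 / ((n : ℝ) + 1)) ^ 2)) ∂μ :=
              (setLIntegral_const B _).symm
          _ ≤ ∫⁻ y in B, ENNReal.ofReal (min 1 (‖y‖ ^ 2)) ∂μ := by
              refine setLIntegral_mono' hBmeas fun y hy => ?_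
              refine ENNReal.ofReal_le_ofReal (min_le_min le_rfl ?_)
              exact pow_le_pow_left₀ (by positivity) hy.1 2
          _ ≤ ∫⁻ y, ENNReal.ofReal (min 1 (‖y‖ ^ 2)) ∂μ := setLIntegral_le_lintegral _ _
      have hBfin : μ B < ⊤ :=
        ENNReal.lt_top_of_mul_ne_top_right (ne_top_of_le_ne_top hint.ne key)
          (by simp only [ne_eq, ENNReal.ofReal_eq_zero, not_le]; exact hc0)
      exact lt_of_le_of_lt (measure_mono hsub) hBfin
    · ext y
      simp only [mem_iUnion, mem_union, mem_setOf_eq, mem_univ, iff_true]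
      rcases le_or_gt ‖y‖ 0 with h | h
      · exact ⟨0, Or.inl h⟩
      · obtain ⟨n, hn⟩ := exists_nat_one_div_lt h
        exact ⟨n, Or.inr hn.le⟩
  -- facts about b
  have hb_pos : ∀ t ∈ Ioc (0 : ℝ) 1, 0 < b t := fun t ht => by
    have := hb_mono (⟨le_rfl, zero_le_one⟩ : (0:ℝ) ∈ Icc (0:ℝ) 1) ⟨ht.1.le, ht.2⟩ ht.1
    rwa [hb0] at this
  have hb_le1 : ∀ t ∈ Ioc (0 : ℝ) 1, b t ≤ 1 := fun t ht => by
    have := hb_mono.monotoneOn ⟨ht.1.le, ht.2⟩ (⟨zero_le_one, le_rfl⟩ : (1:ℝ) ∈ Icc (0:ℝ) 1) ht.2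
    rwa [hb1] at this
  have hbinv_mem : ∀ r ∈ Icc (0 : ℝ) 1, binv r ∈ Icc (0 : ℝ) 1 := by
    intro r hr
    have := intermediate_value_Icc (zero_le_one : (0:ℝ) ≤ 1) hb_cont
    rw [hb0, hb1] at this
    obtain ⟨t, ht, hbt⟩ := this hr
    rw [← hbt, hbinv t ht]
    exact ht
  -- the integrand as a double integral against ν
  set F : ℝ → E → ℝ≥0∞ := fun t y =>
    (ENNReal.ofReal (b t ^ 3))⁻¹ *
      (if ‖y‖ ≤ b t then ENNReal.ofReal (‖y‖ ^ 3) else 0) with hF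
  have hstepA : ∀ t ∈ Ioc (0 : ℝ) 1,
      (ENNReal.ofReal (b t ^ 3))⁻¹ *
          (∫⁻ y in {y : E | 0 < ‖y‖ ∧ ‖y‖ ≤ b t}, ENNReal.ofReal (‖y‖ ^ 3) ∂μ)
        = ∫⁻ y, F t y ∂ν := by
    intro t ht
    have hTmeas : MeasurableSet {y : E | ‖y‖ ≤ b t} := measurable_norm measurableSet_Iic
    have hset : {y : E | 0 < ‖y‖ ∧ ‖y‖ ≤ b t} = {y : E | ‖y‖ ≤ b t} ∩ S := by
      ext y
      simp only [mem_setOf_eq, mem_inter_iff, hS]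
      constructor
      · rintro ⟨h1, h2⟩
        exact ⟨h2, h1, h2.trans (hb_le1 t ht)⟩
      · rintro ⟨h2, h1, _⟩
        exact ⟨h1, h2⟩
    have hres : ∫⁻ y in {y : E | 0 < ‖y‖ ∧ ‖y‖ ≤ b t}, ENNReal.ofReal (‖y‖ ^ 3) ∂μ
        = ∫⁻ y, (if ‖y‖ ≤ b t then ENNReal.ofReal (‖y‖ ^ 3) else 0) ∂ν := by
      rw [hset, ← Measure.restrict_restrict hTmeas, ← hν,
        ← lintegral_indicator hTmeas]
      exact lintegral_congr fun y => by simp [Set.indicator_apply]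
    rw [hres, hF]
    exact (lintegral_const_mul' _ _ (ENNReal.inv_ne_top.mpr
      (by simp only [ne_eq, ENNReal.ofReal_eq_zero, not_le]; exact pow_pos (hb_pos t ht) 3))).symm
  -- measurability of the uncurried integrand
  have hbm : AEMeasurable b (volume.restrict (Ioc (0:ℝ) 1)) :=
    (hb_cont.mono Ioc_subset_Icc_self).aemeasurable measurableSet_Ioc
  have hb1m : AEMeasurable (fun p : ℝ × E => b p.1)
      ((volume.restrict (Ioc (0:ℝ) 1)).prod ν) := hbm.comp_fst
  have hcm : AEMeasurable (fun p : ℝ × E => (ENNReal.ofReal (b p.1 ^ 3))⁻¹)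
      ((volume.restrict (Ioc (0:ℝ) 1)).prod ν) :=
    (ENNReal.measurable_ofReal.comp_aemeasurable (hb1m.pow_const 3)).inv
  have hnm : Measurable (fun p : ℝ × E => ‖p.2‖) := measurable_norm.comp measurable_snd
  have hA : NullMeasurableSet {p : ℝ × E | ‖p.2‖ ≤ b p.1}
      ((volume.restrict (Ioc (0:ℝ) 1)).prod ν) := by
    have he : {p : ℝ × E | ‖p.2‖ ≤ b p.1}
        = (fun p : ℝ × E => b p.1 - ‖p.2‖) ⁻¹' (Ici 0) := by
      ext p; simp [sub_nonneg]
    rw [he]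
    exact (hb1m.sub hnm.aemeasurable).nullMeasurable measurableSet_Ici
  have hgm : AEMeasurable (fun p : ℝ × E => ENNReal.ofReal (‖p.2‖ ^ 3))
      ((volume.restrict (Ioc (0:ℝ) 1)).prod ν) :=
    (ENNReal.measurable_ofReal.comp ((measurable_norm.comp measurable_snd).pow_const 3)).aemeasurable
  have hFmeas : AEMeasurable (Function.uncurry F)
      ((volume.restrict (Ioc (0:ℝ) 1)).prod ν) := by
    have : Function.uncurry F = fun p : ℝ × E =>
        (ENNReal.ofReal (b p.1 ^ 3))⁻¹ *
          ({p : ℝ × E | ‖p.2‖ ≤ b p.1}.indicator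
            (fun p => ENNReal.ofReal (‖p.2‖ ^ 3)) p) := by
      funext p
      simp [Function.uncurry, hF, Set.indicator_apply]
    rw [this]
    exact hcm.mul (hgm.indicator₀ hA)
  -- Tonelli swap
  have hswap : (∫⁻ t in Ioc (0:ℝ) 1, ∫⁻ y, F t y ∂ν)
      = ∫⁻ y, (∫⁻ t in Ioc (0:ℝ) 1, F t y) ∂ν :=
    lintegral_lintegral_swap hFmeas
  -- rewrite the LHS
  have hLHS : (∫⁻ t in Ioc (0 : ℝ) 1,
      (ENNReal.ofReal (b t ^ 3))⁻¹ *
        ∫⁻ y in {y : E | 0 < ‖y‖ ∧ ‖y‖ ≤ b t}, ENNReal.ofReal (‖y‖ ^ 3) ∂μ)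
      = ∫⁻ y, (∫⁻ t in Ioc (0:ℝ) 1, F t y) ∂ν := by
    rw [← hswap]
    exact setLIntegral_congr_fun measurableSet_Ioc hstepA
  -- per-y bound
  have hper : (∫⁻ y, (∫⁻ t in Ioc (0:ℝ) 1, F t y) ∂ν)
      ≤ ∫⁻ y, ENNReal.ofReal (1 / (3 * ρ - 1)) * ENNReal.ofReal (binv ‖y‖) ∂ν := by
    rw [hν]
    refine setLIntegral_mono' hSmeas fun y hy => ?_
    have hy' : 0 < ‖y‖ ∧ ‖y‖ ≤ 1 := hy
    have hmem : ‖y‖ ∈ Icc (0:ℝ) 1 := ⟨hy'.1.le, hy'.2⟩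
    have hs_mem : binv ‖y‖ ∈ Icc (0:ℝ) 1 := hbinv_mem _ hmem
    have hbs : b (binv ‖y‖) = ‖y‖ := hbinv' _ hmem
    have hs0 : 0 < binv ‖y‖ := by
      rcases lt_or_eq_of_le hs_mem.1 with h | h
      · exact h
      · exfalso
        rw [← h, hb0] at hbs
        exact absurd hbs.symm (ne_of_gt hy'.1)
    exact aux_time b ρ hρ hb_mono hb0 hb_rho ‖y‖ (binv ‖y‖) hs0 hs_mem.2 hbs
  have hconst : (∫⁻ y, ENNReal.ofReal (1 / (3 * ρ - 1)) * ENNReal.ofReal (binv ‖y‖) ∂ν)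
      = ENNReal.ofReal (1 / (3 * ρ - 1)) * ∫⁻ y, ENNReal.ofReal (binv ‖y‖) ∂ν :=
    lintegral_const_mul' _ _ ENNReal.ofReal_ne_top
  have hmain : (∫⁻ t in Ioc (0 : ℝ) 1,
      (ENNReal.ofReal (b t ^ 3))⁻¹ *
        ∫⁻ y in {y : E | 0 < ‖y‖ ∧ ‖y‖ ≤ b t}, ENNReal.ofReal (‖y‖ ^ 3) ∂μ)
      ≤ ENNReal.ofReal (1 / (3 * ρ - 1)) * ∫⁻ y, ENNReal.ofReal (binv ‖y‖) ∂ν := by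
    rw [hLHS]
    exact le_trans hper (le_of_eq hconst)
  refine ⟨hmain, lt_of_le_of_lt hmain ?_⟩
  exact ENNReal.mul_lt_top ENNReal.ofReal_lt_top hfin
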